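/- Suppose the hypotheses of Theorem 1 hold, and additionally V(x̄_0, x_0) = 0 (i.e., x_0 = P x̄_0). Then for any input sequence with ‖ū_ℓ‖ ≤ ū_max for all ℓ, the closed-loop trajectories satisfy ‖C̄ x̄_ℓ − C x_ℓ‖ ≤ γ · ū_max for all ℓ ∈ ℕ. -/

import Mathlib

open Matrix

noncomputable def eunorm {n : ℕ} (v : Fin n → ℝ) : ℝ :=
  ‖(WithLp.equiv 2 (Fin n → ℝ)).symm v‖

noncomputable def specNorm {m n : ℕ} (A : Matrix (Fin m) (Fin n) ℝ) : ℝ :=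
  ‖LinearMap.toContinuousLinearMap (Matrix.toEuclideanLin A)‖

lemma eunorm_nonneg {n : ℕ} (v : Fin n → ℝ) : 0 ≤ eunorm v := norm_nonneg _

lemma specNorm_nonneg {m n : ℕ} (A : Matrix (Fin m) (Fin n) ℝ) : 0 ≤ specNorm A := norm_nonneg _

lemma eunorm_sq {n : ℕ} (v : Fin n → ℝ) : eunorm v ^ 2 = v ⬝ᵥ v := by
  rw [eunorm, ← real_inner_self_eq_norm_sq]
  rw [real_inner_self_eq_norm_sq, EuclideanSpace.norm_eq, Real.sq_sqrt (by positivity)]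
  simp [dotProduct, Real.norm_eq_abs, sq_abs, sq]

lemma eunorm_add_le {n : ℕ} (v w : Fin n → ℝ) : eunorm (v + w) ≤ eunorm v + eunorm w := by
  simpa [eunorm] using norm_add_le ((WithLp.equiv 2 (Fin n → ℝ)).symm v) ((WithLp.equiv 2 (Fin n → ℝ)).symm w)

lemma eunorm_neg {n : ℕ} (v : Fin n → ℝ) : eunorm (-v) = eunorm v := by
  simpa [eunorm] using norm_neg ((WithLp.equiv 2 (Fin n → ℝ)).symm v)

lemma eunorm_mulVec_le {m n : ℕ} (A : Matrix (Fin m) (Fin n) ℝ) (v : Fin n → ℝ) :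
    eunorm (A *ᵥ v) ≤ specNorm A * eunorm v := by
  have h := (LinearMap.toContinuousLinearMap (Matrix.toEuclideanLin A)).le_opNorm
    ((WithLp.equiv 2 (Fin n → ℝ)).symm v)
  simpa [eunorm, specNorm, Matrix.toEuclideanLin_toLp] using h

lemma dot_At {q n : ℕ} (A : Matrix (Fin q) (Fin n) ℝ) (v : Fin n → ℝ) (w : Fin q → ℝ) :
    v ⬝ᵥ (Aᵀ *ᵥ w) = (A *ᵥ v) ⬝ᵥ w := by
  rw [dotProduct_mulVec, vecMul_transpose]


/-- if `x₀ = Px̄₀` (i.e. `V(x̄₀,x₀) = 0`), the closed-loop output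
tracking error is bounded by `γ·ū_max` at every step. -/
theorem stmt_16 {n nb m mb p : ℕ}
    (A_L : Matrix (Fin n) (Fin n) ℝ) (B_L : Matrix (Fin n) (Fin m) ℝ)
    (C : Matrix (Fin p) (Fin n) ℝ)
    (Ab_L : Matrix (Fin nb) (Fin nb) ℝ) (Bb_L : Matrix (Fin nb) (Fin mb) ℝ)
    (Cb : Matrix (Fin p) (Fin nb) ℝ)
    (M : Matrix (Fin n) (Fin n) ℝ) (hM : M.PosDef)
    (K : Matrix (Fin m) (Fin n) ℝ) (l : ℝ) (hl0 : 0 < l) (hl : l < 1 / 2)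
    (hcontr : ((-(2 * l)) • M -
      ((A_L + B_L * K)ᵀ * M * (A_L + B_L * K) - M)).PosSemidef)
    (hMC : (M - Cᵀ * C).PosSemidef)
    (P : Matrix (Fin n) (Fin nb) ℝ) (Q : Matrix (Fin m) (Fin nb) ℝ)
    (hCP : C * P = Cb) (hPA : P * Ab_L = A_L * P + B_L * Q)
    (R : Matrix (Fin m) (Fin mb) ℝ)
    (γ : ℝ)
    (hγ : γ = Real.sqrt (1 - l) / l * specNorm ((hM.posSemidef.1.eigenvectorUnitary.1 *
      diagonal ((↑) ∘ Real.sqrt ∘ hM.posSemidef.1.eigenvalues) *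
      (star hM.posSemidef.1.eigenvectorUnitary : Matrix (Fin n) (Fin n) ℝ)) *
      (B_L * R - P * Bb_L)))
    (ub_max : ℝ) (hub_max : 0 < ub_max)
    (xb : ℕ → Fin nb → ℝ) (x : ℕ → Fin n → ℝ) (ub : ℕ → Fin mb → ℝ)
    (hub : ∀ ℓ, eunorm (ub ℓ) ≤ ub_max)
    (hdyn' : ∀ ℓ, xb (ℓ + 1) = Ab_L.mulVec (xb ℓ) + Bb_L.mulVec (ub ℓ))
    (hdyn : ∀ ℓ, x (ℓ + 1) = A_L.mulVec (x ℓ) +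
      B_L.mulVec (R.mulVec (ub ℓ) + Q.mulVec (xb ℓ) +
        K.mulVec (x ℓ - P.mulVec (xb ℓ))))
    (hinit : x 0 = P.mulVec (xb 0)) :
    ∀ ℓ : ℕ, eunorm (Cb.mulVec (xb ℓ) - C.mulVec (x ℓ)) ≤ γ * ub_max := by
  set S := (hM.posSemidef.1.eigenvectorUnitary.1 *
      diagonal ((↑) ∘ Real.sqrt ∘ hM.posSemidef.1.eigenvalues) *
      (star hM.posSemidef.1.eigenvectorUnitary : Matrix (Fin n) (Fin n) ℝ)) with hSdef
  set D := B_L * R - P * Bb_L with hDdef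
  set Acl := A_L + B_L * K with hAcl
  have hSt : Sᵀ = S := by
    have h : S.IsHermitian := by
      rw [hSdef]
      exact isHermitian_mul_mul_conjTranspose _ (isHermitian_diagonal _)
    rwa [Matrix.IsHermitian, conjTranspose_eq_transpose_of_trivial] at h
  have hSS : S * S = M := by
    have hsp := hM.posSemidef.1.spectral_theorem
    rw [Unitary.conjStarAlgAut_apply] at hsp
    conv_rhs => rw [hsp]
    have hU : (star hM.posSemidef.1.eigenvectorUnitary : Matrix (Fin n) (Fin n) ℝ) *
        hM.posSemidef.1.eigenvectorUnitary.1 = 1 := Unitary.coe_star_mul_self _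
    rw [hSdef]
    simp only [Matrix.mul_assoc]
    rw [← Matrix.mul_assoc _ _ (diagonal _ * _), hU, Matrix.one_mul, ← Matrix.mul_assoc (diagonal _) (diagonal _),
      diagonal_mul_diagonal]
    congr 3
    funext i
    simp [Real.mul_self_sqrt (hM.posSemidef.eigenvalues_nonneg i)]
  clear_value S
  -- ‖S v‖² = vᵀ M v
  have quadS : ∀ v : Fin n → ℝ, eunorm (S *ᵥ v) ^ 2 = v ⬝ᵥ (M *ᵥ v) := by
    intro v
    rw [eunorm_sq, ← hSS, ← Matrix.mulVec_mulVec, ← dot_At, hSt]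
  -- error recurrence
  have he : ∀ ℓ, x (ℓ+1) - P *ᵥ xb (ℓ+1)
      = Acl *ᵥ (x ℓ - P *ᵥ xb ℓ) + D *ᵥ ub ℓ := by
    intro ℓ
    have h1 : P *ᵥ (Ab_L *ᵥ xb ℓ) = A_L *ᵥ (P *ᵥ xb ℓ) + B_L *ᵥ (Q *ᵥ xb ℓ) := by
      rw [Matrix.mulVec_mulVec, hPA, Matrix.add_mulVec, ← Matrix.mulVec_mulVec,
        ← Matrix.mulVec_mulVec]
    rw [hdyn, hdyn']
    simp only [hAcl, hDdef, Matrix.mulVec_add, Matrix.add_mulVec, Matrix.mulVec_sub,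
      Matrix.sub_mulVec, ← Matrix.mulVec_mulVec]
    rw [h1]
    abel
  -- contraction bound
  have hlube : (1:ℝ) - 2*l ≥ 0 := by nlinarith
  have hquadA : ∀ v : Fin n → ℝ,
      eunorm (S *ᵥ (Acl *ᵥ v)) ≤ Real.sqrt (1 - 2*l) * eunorm (S *ᵥ v) := by
    intro v
    have h := hcontr.dotProduct_mulVec_nonneg v
    simp only [star_trivial, Matrix.sub_mulVec, Matrix.smul_mulVec,
      dotProduct_sub, dotProduct_smul] at h
    have hq : v ⬝ᵥ ((Aclᵀ * M * Acl) *ᵥ v) = (Acl *ᵥ v) ⬝ᵥ (M *ᵥ (Acl *ᵥ v)) := by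
      rw [Matrix.mul_assoc, ← Matrix.mulVec_mulVec, dot_At, Matrix.mulVec_mulVec]
    have hsq : eunorm (S *ᵥ (Acl *ᵥ v)) ^ 2 ≤ (1 - 2*l) * eunorm (S *ᵥ v) ^ 2 := by
      rw [quadS, quadS]
      rw [hq] at h
      simp only [smul_eq_mul] at h
      nlinarith [h]
    have h1 : 0 ≤ eunorm (S *ᵥ (Acl *ᵥ v)) := eunorm_nonneg _
    have h2 : 0 ≤ Real.sqrt (1 - 2*l) * eunorm (S *ᵥ v) :=
      mul_nonneg (Real.sqrt_nonneg _) (eunorm_nonneg _)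
    rw [← pow_le_pow_iff_left₀ h1 h2 (two_ne_zero)]
    rw [mul_pow, Real.sq_sqrt hlube]; exact hsq
  -- nonnegativity facts
  have hδ : (0:ℝ) ≤ specNorm (S * D) := specNorm_nonneg _
  have hs : Real.sqrt (1-l) ^ 2 = 1 - l := Real.sq_sqrt (by nlinarith)
  have hls : l ≤ Real.sqrt (1 - l) := by
    nlinarith [Real.sqrt_nonneg (1-l), hs]
  have hγ0 : 0 ≤ γ := by
    rw [hγ]; exact mul_nonneg (div_nonneg (Real.sqrt_nonneg _) hl0.le) hδ
  have has : Real.sqrt (1-2*l) * Real.sqrt (1-l) + l ≤ Real.sqrt (1-l) := by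
    have h1 : Real.sqrt (1-2*l) * Real.sqrt (1-l) = Real.sqrt ((1-2*l)*(1-l)) :=
      (Real.sqrt_mul hlube _).symm
    have h2 : Real.sqrt ((1-2*l)*(1-l)) ≤ Real.sqrt (1-l) - l := by
      rw [← Real.sqrt_sq (by linarith : (0:ℝ) ≤ Real.sqrt (1-l) - l)]
      apply Real.sqrt_le_sqrt
      nlinarith [hs, sq_nonneg (Real.sqrt (1-l) - 1), hl0.le]
    rw [h1]; linarith
  -- key invariant
  have key : ∀ ℓ, eunorm (S *ᵥ (x ℓ - P *ᵥ xb ℓ)) ≤ γ * ub_max := by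
    intro ℓ
    induction ℓ with
    | zero =>
      rw [hinit, sub_self, Matrix.mulVec_zero]
      have : eunorm (0 : Fin n → ℝ) = 0 := by simp [eunorm]
      rw [this]
      exact mul_nonneg hγ0 hub_max.le
    | succ ℓ ih =>
      rw [he ℓ, Matrix.mulVec_add]
      have step2 : eunorm (S *ᵥ (D *ᵥ ub ℓ)) ≤ specNorm (S*D) * ub_max := by
        rw [Matrix.mulVec_mulVec]
        exact (eunorm_mulVec_le _ _).trans
          (mul_le_mul_of_nonneg_left (hub ℓ) hδ)
      have step1 : eunorm (S *ᵥ (Acl *ᵥ (x ℓ - P *ᵥ xb ℓ)))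
          ≤ Real.sqrt (1-2*l) * (γ * ub_max) :=
        (hquadA _).trans (mul_le_mul_of_nonneg_left ih (Real.sqrt_nonneg _))
      have tri := eunorm_add_le (S *ᵥ (Acl *ᵥ (x ℓ - P *ᵥ xb ℓ))) (S *ᵥ (D *ᵥ ub ℓ))
      have hδu : 0 ≤ specNorm (S*D) * ub_max := mul_nonneg hδ hub_max.le
      have h3 : (Real.sqrt (1-2*l) * Real.sqrt (1-l) + l) * (specNorm (S*D) * ub_max)
          ≤ Real.sqrt (1-l) * (specNorm (S*D) * ub_max) :=
        mul_le_mul_of_nonneg_right has hδu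
      have hl' : l ≠ 0 := hl0.ne'
      have e1 : γ * ub_max
          = (Real.sqrt (1-l) * (specNorm (S*D) * ub_max)) / l := by
        rw [hγ]; ring
      have hfin : Real.sqrt (1-2*l) * (γ * ub_max) + specNorm (S*D) * ub_max ≤ γ * ub_max := by
        rw [e1]
        have e2 : Real.sqrt (1-2*l) * ((Real.sqrt (1-l) * (specNorm (S*D) * ub_max)) / l)
            + specNorm (S*D) * ub_max
            = ((Real.sqrt (1-2*l) * Real.sqrt (1-l) + l) * (specNorm (S*D) * ub_max)) / l := by
          field_simp
        rw [e2]
        exact (div_le_div_iff_of_pos_right hl0).mpr h3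
      linarith
  -- conclude
  intro ℓ
  have hC : Cb *ᵥ xb ℓ - C *ᵥ x ℓ = -(C *ᵥ (x ℓ - P *ᵥ xb ℓ)) := by
    rw [← hCP, ← Matrix.mulVec_mulVec, Matrix.mulVec_sub, neg_sub]
  rw [hC, eunorm_neg]
  have h4 : eunorm (C *ᵥ (x ℓ - P *ᵥ xb ℓ)) ≤ eunorm (S *ᵥ (x ℓ - P *ᵥ xb ℓ)) := by
    rw [← pow_le_pow_iff_left₀ (eunorm_nonneg _) (eunorm_nonneg _) two_ne_zero]
    rw [eunorm_sq, quadS]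
    have h := hMC.dotProduct_mulVec_nonneg (x ℓ - P *ᵥ xb ℓ)
    simp only [star_trivial, Matrix.sub_mulVec, dotProduct_sub] at h
    have hq : (x ℓ - P *ᵥ xb ℓ) ⬝ᵥ ((Cᵀ * C) *ᵥ (x ℓ - P *ᵥ xb ℓ))
        = (C *ᵥ (x ℓ - P *ᵥ xb ℓ)) ⬝ᵥ (C *ᵥ (x ℓ - P *ᵥ xb ℓ)) := by
      rw [← Matrix.mulVec_mulVec, dot_At]
    rw [← hq]
    linarith
  exact h4.trans (key ℓ)
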